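/- Let f = f₁ - f₂ be level-bounded, f₁ σ₁-convex, f₂ σ₂-convex, σ₁+σ₂ > 0, γ ∈ [0,(σ₁+σ₂)/2), and let {xᵏ} be generated by the exact refined inertial DCA with x⁻¹ = x⁰ ∈ dom f₁. Then the sequence {xᵏ} is bounded. -/
import Mathlib


open RealInnerProductSpace

def subdiff {n : ℕ} (f : EuclideanSpace ℝ (Fin n) → ℝ) (x : EuclideanSpace ℝ (Fin n)) :
    Set (EuclideanSpace ℝ (Fin n)) :=
  {y | ∀ z, f x + ⟪y, z - x⟫ ≤ f z}

def StrongConvex {n : ℕ} (σ : ℝ) (f : EuclideanSpace ℝ (Fin n) → ℝ) : Prop :=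
  ConvexOn ℝ Set.univ (fun x => f x - σ / 2 * ‖x‖ ^ 2)

lemma strong_subgrad {n : ℕ} {σ : ℝ} {f : EuclideanSpace ℝ (Fin n) → ℝ}
    (hf : StrongConvex σ f) {x y : EuclideanSpace ℝ (Fin n)}
    (hy : y ∈ subdiff f x) (z : EuclideanSpace ℝ (Fin n)) :
    f x + ⟪y, z - x⟫ + σ / 2 * ‖z - x‖ ^ 2 ≤ f z := by
  have key : ∀ t : ℝ, 0 < t → t ≤ 1 →
      ⟪y, z - x⟫ + σ / 2 * (1 - t) * ‖z - x‖ ^ 2 ≤ f z - f x := by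
    intro t ht ht1
    have hconv := hf.2 (Set.mem_univ x) (Set.mem_univ z)
      (by linarith : (0:ℝ) ≤ 1 - t) ht.le (by ring)
    have hpt : (1 - t) • x + t • z = x + t • (z - x) := by
      rw [sub_smul, one_smul, smul_sub]; abel
    rw [hpt] at hconv
    have hsub := hy (x + t • (z - x))
    have hinner : ⟪y, (x + t • (z - x)) - x⟫ = t * ⟪y, z - x⟫ := by
      rw [add_sub_cancel_left, real_inner_smul_right]
    rw [hinner] at hsub
    have hnorm : ‖x + t • (z - x)‖ ^ 2
        = ‖x‖ ^ 2 + 2 * (t * ⟪x, z - x⟫) + t ^ 2 * ‖z - x‖ ^ 2 := by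
      rw [norm_add_sq_real, real_inner_smul_right, norm_smul]
      rw [mul_pow, Real.norm_eq_abs, sq_abs]
    have hz : ‖z‖ ^ 2 = ‖x‖ ^ 2 + 2 * ⟪x, z - x⟫ + ‖z - x‖ ^ 2 := by
      have h := norm_add_sq_real x (z - x)
      rw [add_sub_cancel] at h
      exact h
    simp only [smul_eq_mul] at hconv
    rw [hnorm, hz] at hconv
    have h1 : t * (⟪y, z - x⟫ + σ / 2 * (1 - t) * ‖z - x‖ ^ 2) ≤ t * (f z - f x) := by
      nlinarith [hsub, hconv]
    exact le_of_mul_le_mul_left h1 ht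
  have lim : Filter.Tendsto
      (fun m : ℕ => ⟪y, z - x⟫ + σ / 2 * (1 - 1 / (m + 1)) * ‖z - x‖ ^ 2)
      Filter.atTop (nhds (⟪y, z - x⟫ + σ / 2 * (1 - 0) * ‖z - x‖ ^ 2)) := by
    exact Filter.Tendsto.const_add _ (Filter.Tendsto.mul_const _
      (Filter.Tendsto.const_mul _
        (tendsto_const_nhds.sub tendsto_one_div_add_atTop_nhds_zero_nat)))
  have hle := le_of_tendsto lim (Filter.Eventually.of_forall (fun m => by
    refine key (1 / (m + 1)) (by positivity) ?_
    rw [div_le_one (by positivity)]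
    have : (0:ℝ) ≤ (m:ℝ) := Nat.cast_nonneg m
    linarith))
  simp only [sub_zero] at hle
  linarith

/-- Theorem 3.1(i): boundedness of the iterates of the exact refined inertial DCA
when f = f₁ - f₂ is level-bounded.  Here `x 0 = x^{-1}`, `x 1 = x^0`. -/
theorem RInDCAe_bounded {n : ℕ}
    (f₁ f₂ : EuclideanSpace ℝ (Fin n) → ℝ) (σ₁ σ₂ γ : ℝ)
    (hσ₁ : 0 ≤ σ₁) (hσ₂ : 0 ≤ σ₂) (hpos : 0 < σ₁ + σ₂)
    (hγ : γ ∈ Set.Ico (0 : ℝ) ((σ₁ + σ₂) / 2))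
    (hf₁ : StrongConvex σ₁ f₁) (hf₂ : StrongConvex σ₂ f₂)
    (hlevel : ∀ r : ℝ, Bornology.IsBounded {z : EuclideanSpace ℝ (Fin n) | f₁ z - f₂ z ≤ r})
    (x y : ℕ → EuclideanSpace ℝ (Fin n)) (hinit : x 0 = x 1)
    (hy : ∀ k, y k ∈ subdiff f₂ (x (k + 1)))
    (hstep : ∀ k, y k + γ • (x (k + 1) - x k) ∈ subdiff f₁ (x (k + 2))) :
    Bornology.IsBounded (Set.range x) := by
  obtain ⟨hγ0, hγlt⟩ := hγ
  set f : EuclideanSpace ℝ (Fin n) → ℝ := fun z => f₁ z - f₂ z with hf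
  set E : ℕ → ℝ := fun k => f (x (k + 1)) + γ / 2 * ‖x (k + 1) - x k‖ ^ 2 with hE
  have descent : ∀ k, E (k + 1) ≤ E k := by
    intro k
    set a := x k
    set b := x (k + 1)
    set c := x (k + 2)
    have h2 := strong_subgrad hf₂ (hy k) c
    have h1 := strong_subgrad hf₁ (hstep k) b
    have hinner : ⟪y k + γ • (b - a), b - c⟫
        = ⟪y k, b - c⟫ + γ * ⟪b - a, b - c⟫ := by
      rw [inner_add_left, real_inner_smul_left]
    rw [hinner] at h1
    have hflip : ⟪y k, b - c⟫ = -⟪y k, c - b⟫ := by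
      rw [← inner_neg_right, neg_sub]
    rw [hflip] at h1
    have hnrev : ‖b - c‖ = ‖c - b‖ := norm_sub_rev _ _
    rw [hnrev] at h1
    have hcs : -(‖b - a‖ * ‖c - b‖) ≤ ⟪b - a, b - c⟫ := by
      have := abs_real_inner_le_norm (b - a) (b - c)
      rw [hnrev] at this
      have := neg_abs_le (⟪b - a, b - c⟫ : ℝ)
      linarith [abs_real_inner_le_norm (b - a) (b - c), norm_sub_rev b c]
    have hamgm : 2 * (‖b - a‖ * ‖c - b‖) ≤ ‖b - a‖ ^ 2 + ‖c - b‖ ^ 2 := by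
      nlinarith [sq_nonneg (‖b - a‖ - ‖c - b‖)]
    show f c + γ / 2 * ‖c - b‖ ^ 2 ≤ f b + γ / 2 * ‖b - a‖ ^ 2
    simp only [hf]
    nlinarith [sq_nonneg ‖c - b‖, mul_le_mul_of_nonneg_left hamgm (by linarith : (0:ℝ) ≤ γ / 2),
      mul_le_mul_of_nonneg_left hcs hγ0]
  have hE0 : E 0 = f (x 1) := by
    simp [hE, ← hinit, sub_self]
  have hEmono : ∀ k, E k ≤ E 0 := by
    intro k
    induction k with
    | zero => exact le_refl _
    | succ m ih => exact le_trans (descent m) ih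
  have hsub : ∀ k, f (x k) ≤ f (x 1) := by
    intro k
    cases k with
    | zero => rw [hinit]
    | succ m =>
      have h1 : f (x (m + 1)) ≤ E m := by
        have : 0 ≤ γ / 2 * ‖x (m + 1) - x m‖ ^ 2 := by positivity
        simp only [hE]; linarith
      linarith [hEmono m, hE0.le, hE0.ge]
  refine (hlevel (f₁ (x 1) - f₂ (x 1))).subset ?_
  rintro _ ⟨k, rfl⟩
  exact hsub k
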